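/- There exists an integral domain R that is a U-FFD such that the polynomial ring R[X] is not a U-FFD; that is, the unrestricted finite factorization property does not ascend to polynomial extensions. -/

import Mathlib

/-- The set of factorizations of `a`: multisets of atoms (irreducible elements), counted up
to associates, whose product is associated to `a`. -/
def FactorizationsOf {α : Type*} [CommMonoid α] (a : α) : Set (Multiset (Associates α)) :=
  {s | (∀ p ∈ s, Irreducible p) ∧ s.prod = Associates.mk a}

/-- An element is atomic if it is a unit or a finite product of atoms; equivalently, some
finite multiset of atoms has product associated to it. -/
def IsAtomicElem {α : Type*} [CommMonoid α] (a : α) : Prop :=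
  ∃ s : Multiset α, (∀ p ∈ s, Irreducible p) ∧ Associated s.prod a

/-- An integral domain is an unrestricted finite factorization domain (U-FFD) if every
nonzero atomic element has only finitely many factorizations. -/
def IsUFFD (R : Type*) [CommRing R] : Prop :=
  ∀ a : R, a ≠ 0 → IsAtomicElem a → (FactorizationsOf a).Finite

open Finsupp AddMonoidAlgebra

variable {G : Type} [AddCommMonoid G] [LinearOrder G] [IsOrderedCancelAddMonoid G]

local notation "R'" => AddMonoidAlgebra (ZMod 2) G

lemma zmod2_ne_zero : ∀ c : ZMod 2, c ≠ 0 → c = 1 := by decide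

lemma mul_apply_of_max (u w : R') {a b : G}
    (ha : ∀ i ∈ u.coeff.support, i ≤ a) (hb : ∀ j ∈ w.coeff.support, j ≤ b) :
    (u * w).coeff (a + b) = u.coeff a * w.coeff b := by
  classical
  have hkey : ∀ i ∈ u.coeff.support, ∀ j ∈ w.coeff.support, i + j = a + b → i = a ∧ j = b := by
    intro i hi j hj hij
    rcases eq_or_lt_of_le (ha i hi) with rfl | hlt
    · exact ⟨rfl, add_left_cancel hij⟩
    · exact absurd hij (ne_of_lt (add_lt_add_of_lt_of_le hlt (hb j hj)))
  rw [AddMonoidAlgebra.mul_apply]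
  by_cases hau : a ∈ u.coeff.support
  · rw [Finsupp.sum, Finset.sum_eq_single_of_mem a hau]
    · by_cases hbw : b ∈ w.coeff.support
      · rw [Finsupp.sum, Finset.sum_eq_single_of_mem b hbw]
        · rw [if_pos rfl]
        · intro j hj hne
          exact if_neg (fun hc => hne (add_left_cancel hc))
      · rw [Finsupp.notMem_support_iff.mp hbw, mul_zero]
        apply Finset.sum_eq_zero
        intro j hj
        exact if_neg (fun hc => hbw ((hkey a hau j hj hc).2 ▸ hj))
    · intro i hi hne
      apply Finset.sum_eq_zero
      intro j hj
      exact if_neg (fun hc => hne (hkey i hi j hj hc).1)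
  · rw [Finsupp.notMem_support_iff.mp hau, zero_mul]
    apply Finset.sum_eq_zero
    intro i hi
    apply Finset.sum_eq_zero
    intro j hj
    exact if_neg (fun hc => hau ((hkey i hi j hj hc).1 ▸ hi))

lemma mul_apply_of_min (u w : R') {a b : G}
    (ha : ∀ i ∈ u.coeff.support, a ≤ i) (hb : ∀ j ∈ w.coeff.support, b ≤ j) :
    (u * w).coeff (a + b) = u.coeff a * w.coeff b := by
  classical
  have hkey : ∀ i ∈ u.coeff.support, ∀ j ∈ w.coeff.support, i + j = a + b → i = a ∧ j = b := by
    intro i hi j hj hij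
    rcases eq_or_lt_of_le (ha i hi) with h | hlt
    · exact ⟨h.symm, by rw [← h] at hij; exact add_left_cancel hij⟩
    · exact absurd hij (ne_of_gt (add_lt_add_of_lt_of_le hlt (hb j hj)))
  rw [AddMonoidAlgebra.mul_apply]
  by_cases hau : a ∈ u.coeff.support
  · rw [Finsupp.sum, Finset.sum_eq_single_of_mem a hau]
    · by_cases hbw : b ∈ w.coeff.support
      · rw [Finsupp.sum, Finset.sum_eq_single_of_mem b hbw]
        · rw [if_pos rfl]
        · intro j hj hne
          exact if_neg (fun hc => hne (add_left_cancel hc))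
      · rw [Finsupp.notMem_support_iff.mp hbw, mul_zero]
        apply Finset.sum_eq_zero
        intro j hj
        exact if_neg (fun hc => hbw ((hkey a hau j hj hc).2 ▸ hj))
    · intro i hi hne
      apply Finset.sum_eq_zero
      intro j hj
      exact if_neg (fun hc => hne (hkey i hi j hj hc).1)
  · rw [Finsupp.notMem_support_iff.mp hau, zero_mul]
    apply Finset.sum_eq_zero
    intro i hi
    apply Finset.sum_eq_zero
    intro j hj
    exact if_neg (fun hc => hau ((hkey i hi j hj hc).1 ▸ hi))

/-- If a product equals a monomial, both factors are monomials (coefficient field `ZMod 2`). -/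
lemma eq_single_of_mul_eq_single {u w : R'} {m : G}
    (h : u * w = AddMonoidAlgebra.single m 1) :
    ∃ x y : G, x + y = m ∧ u = AddMonoidAlgebra.single x 1 ∧ w = AddMonoidAlgebra.single y 1 := by
  classical
  have hu : u ≠ 0 := by
    rintro rfl
    rw [zero_mul] at h
    exact one_ne_zero (AddMonoidAlgebra.single_eq_zero.mp h.symm)
  have hw : w ≠ 0 := by
    rintro rfl
    rw [mul_zero] at h
    exact one_ne_zero (AddMonoidAlgebra.single_eq_zero.mp h.symm)
  have hA : u.coeff.support.Nonempty := Finsupp.support_nonempty_iff.mpr (by simpa using hu)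
  have hB : w.coeff.support.Nonempty := Finsupp.support_nonempty_iff.mpr (by simpa using hw)
  set aM := u.coeff.support.max' hA with haM
  set bM := w.coeff.support.max' hB with hbM
  set am := u.coeff.support.min' hA with ham
  set bm := w.coeff.support.min' hB with hbm
  have h1 : (u * w).coeff (aM + bM) = u.coeff aM * w.coeff bM :=
    mul_apply_of_max u w (fun i hi => Finset.le_max' _ i hi) (fun j hj => Finset.le_max' _ j hj)
  have h2 : (u * w).coeff (am + bm) = u.coeff am * w.coeff bm :=
    mul_apply_of_min u w (fun i hi => Finset.min'_le _ i hi) (fun j hj => Finset.min'_le _ j hj)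
  have huaM : u.coeff aM ≠ 0 := Finsupp.mem_support_iff.mp (u.coeff.support.max'_mem hA)
  have hwbM : w.coeff bM ≠ 0 := Finsupp.mem_support_iff.mp (w.coeff.support.max'_mem hB)
  have huam : u.coeff am ≠ 0 := Finsupp.mem_support_iff.mp (u.coeff.support.min'_mem hA)
  have hwbm : w.coeff bm ≠ 0 := Finsupp.mem_support_iff.mp (w.coeff.support.min'_mem hB)
  have hM : aM + bM = m := by
    by_contra hne
    rw [h, AddMonoidAlgebra.coeff_single, Finsupp.single_eq_of_ne' (Ne.symm hne)] at h1
    exact mul_ne_zero huaM hwbM h1.symm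
  have hm' : am + bm = m := by
    by_contra hne
    rw [h, AddMonoidAlgebra.coeff_single, Finsupp.single_eq_of_ne' (Ne.symm hne)] at h2
    exact mul_ne_zero huam hwbm h2.symm
  have haeq : am = aM := by
    refine le_antisymm (Finset.min'_le _ _ (u.coeff.support.max'_mem hA)) ?_
    have hb : bm ≤ bM := Finset.min'_le _ _ (w.coeff.support.max'_mem hB)
    have : aM + bm ≤ aM + bM := add_le_add_right hb _
    rw [hM, ← hm'] at this
    exact le_of_add_le_add_right this
  have hbeq : bm = bM := by
    have := hM ▸ hm'
    rw [haeq] at this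
    exact add_left_cancel this
  have hus : u = AddMonoidAlgebra.single aM (u.coeff aM) := by
    apply AddMonoidAlgebra.coeff_injective
    rw [AddMonoidAlgebra.coeff_single, ← Finsupp.support_subset_singleton]
    intro i hi
    have h1 := Finset.min'_le _ i hi
    have h2 := Finset.le_max' _ i hi
    exact Finset.mem_singleton.mpr (le_antisymm h2 ((le_of_eq haeq.symm).trans h1))
  have hws : w = AddMonoidAlgebra.single bM (w.coeff bM) := by
    apply AddMonoidAlgebra.coeff_injective
    rw [AddMonoidAlgebra.coeff_single, ← Finsupp.support_subset_singleton]
    intro j hj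
    have h1 := Finset.min'_le _ j hj
    have h2 := Finset.le_max' _ j hj
    exact Finset.mem_singleton.mpr (le_antisymm h2 ((le_of_eq hbeq.symm).trans h1))
  exact ⟨aM, bM, hM, by rw [hus, zmod2_ne_zero _ huaM], by rw [hws, zmod2_ne_zero _ hwbM]⟩


noncomputable section

abbrev Gam := Lex (Fin 3 →₀ ℚ)

/-- helper constructor -/
def mkG (q s v : ℚ) : Gam :=
  toLex (Finsupp.single 0 q + Finsupp.single 1 s + Finsupp.single 2 v)

lemma mkG_apply0 (q s v : ℚ) : ofLex (mkG q s v) 0 = q := by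
  simp [mkG, Finsupp.single_apply]
lemma mkG_apply1 (q s v : ℚ) : ofLex (mkG q s v) 1 = s := by
  simp [mkG, Finsupp.single_apply]
lemma mkG_apply2 (q s v : ℚ) : ofLex (mkG q s v) 2 = v := by
  simp [mkG, Finsupp.single_apply]

lemma mkG_add (q s v q' s' v' : ℚ) : mkG q s v + mkG q' s' v' = mkG (q+q') (s+s') (v+v') := by
  unfold mkG
  rw [← toLex_add]
  apply congrArg toLex
  ext i
  simp [Finsupp.single_apply]
  split <;> split <;> ring

def Mcar : AddSubmonoid Gam where
  carrier := {x | 0 ≤ ofLex x 1 ∧ ofLex x 1 ≤ ofLex x 0 ∧ |ofLex x 2| ≤ ofLex x 0}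
  zero_mem' := by simp
  add_mem' := by
    rintro a b ⟨h1, h2, h3⟩ ⟨g1, g2, g3⟩
    refine ⟨?_, ?_, ?_⟩
    · simpa using add_le_add h1 g1
    · simpa using add_le_add h2 g2
    · calc |ofLex (a+b) 2| = |ofLex a 2 + ofLex b 2| := by simp
        _ ≤ |ofLex a 2| + |ofLex b 2| := abs_add_le _ _
        _ ≤ _ := by simpa using add_le_add h3 g3

lemma mem_Mcar {x : Gam} :
    x ∈ Mcar ↔ 0 ≤ ofLex x 1 ∧ ofLex x 1 ≤ ofLex x 0 ∧ |ofLex x 2| ≤ ofLex x 0 :=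
  Iff.rfl

/-- an element of M is zero as soon as its first coordinate vanishes -/
lemma eq_zero_of_q_zero (x : ↥Mcar) (h0 : ofLex (x : Gam) 0 = 0) : x = 0 := by
  obtain ⟨h1, h2, h3⟩ := x.2
  rw [h0] at h2 h3
  have hs : ofLex (x : Gam) 1 = 0 := le_antisymm h2 h1
  have hv : ofLex (x : Gam) 2 = 0 := abs_eq_zero.mp (le_antisymm h3 (abs_nonneg _))
  apply Subtype.ext
  show (x : Gam) = 0
  apply toLex.symm.injective
  ext i
  fin_cases i
  · exact h0
  · exact hs
  · exact hv

end
noncomputable section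

def qv (n : ℕ) : ℚ := ((n : ℚ) + 1)⁻¹

lemma qv_pos (n : ℕ) : 0 < qv n := by
  rw [qv]
  apply inv_pos.mpr
  positivity
lemma qv_le_one (n : ℕ) : qv n ≤ 1 := by
  rw [qv]
  rw [inv_le_one_iff₀]
  right; linarith [Nat.cast_nonneg (α := ℚ) n]
lemma qv_inj {n m : ℕ} (h : qv n = qv m) : n = m := by
  have := inv_injective h
  have : (n : ℚ) = m := by linarith
  exact_mod_cast this

lemma abs_qv (n : ℕ) : |qv n| = qv n := abs_of_pos (qv_pos n)
lemma abs_neg_qv (n : ℕ) : |(-qv n)| = qv n := by rw [abs_neg]; exact abs_qv n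

def cM (n : ℕ) : ↥Mcar := ⟨mkG 1 0 (qv n), by
  rw [mem_Mcar, mkG_apply0, mkG_apply1, mkG_apply2]
  exact ⟨le_refl 0, zero_le_one, by rw [abs_qv]; exact qv_le_one n⟩⟩
def cM' (n : ℕ) : ↥Mcar := ⟨mkG 1 1 (qv n), by
  rw [mem_Mcar, mkG_apply0, mkG_apply1, mkG_apply2]
  exact ⟨zero_le_one, le_refl 1, by rw [abs_qv]; exact qv_le_one n⟩⟩
def dM (n : ℕ) : ↥Mcar := ⟨mkG 1 0 (-qv n), by
  rw [mem_Mcar, mkG_apply0, mkG_apply1, mkG_apply2]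
  exact ⟨le_refl 0, zero_le_one, by rw [abs_neg_qv]; exact qv_le_one n⟩⟩
def dM' (n : ℕ) : ↥Mcar := ⟨mkG 1 1 (-qv n), by
  rw [mem_Mcar, mkG_apply0, mkG_apply1, mkG_apply2]
  exact ⟨zero_le_one, le_refl 1, by rw [abs_neg_qv]; exact qv_le_one n⟩⟩
def LM : ↥Mcar := ⟨mkG 2 0 0, by
  rw [mem_Mcar, mkG_apply0, mkG_apply1, mkG_apply2]
  norm_num⟩
def LA : ↥Mcar := ⟨mkG 2 1 0, by
  rw [mem_Mcar, mkG_apply0, mkG_apply1, mkG_apply2]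
  norm_num⟩
def L2A : ↥Mcar := ⟨mkG 2 2 0, by
  rw [mem_Mcar, mkG_apply0, mkG_apply1, mkG_apply2]
  norm_num⟩

lemma cM_add_dM (n : ℕ) : cM n + dM n = LM := by
  apply Subtype.ext
  show mkG 1 0 (qv n) + mkG 1 0 (-qv n) = mkG 2 0 0
  rw [mkG_add]; norm_num
lemma cM_add_dM' (n : ℕ) : cM n + dM' n = LA := by
  apply Subtype.ext
  show mkG 1 0 (qv n) + mkG 1 1 (-qv n) = mkG 2 1 0
  rw [mkG_add]; norm_num
lemma cM'_add_dM (n : ℕ) : cM' n + dM n = LA := by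
  apply Subtype.ext
  show mkG 1 1 (qv n) + mkG 1 0 (-qv n) = mkG 2 1 0
  rw [mkG_add]; norm_num
lemma cM'_add_dM' (n : ℕ) : cM' n + dM' n = L2A := by
  apply Subtype.ext
  show mkG 1 1 (qv n) + mkG 1 1 (-qv n) = mkG 2 2 0
  rw [mkG_add]; norm_num


lemma coordEq {x y : ↥Mcar} (h : x = y) (i : Fin 3) :
    ofLex (x : Gam) i = ofLex (y : Gam) i := by rw [h]

lemma coordAdd (x y : ↥Mcar) (i : Fin 3) :
    ofLex ((x + y : ↥Mcar) : Gam) i = ofLex (x : Gam) i + ofLex (y : Gam) i := by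
  rfl

/-- the coprimality/rigidity lemma: if `x` divides (in M) both an element with coordinates
(1, 0, *) and one with coordinates (1, 1, *), then `x = 0`. -/
lemma cop {w w' x y z : ↥Mcar}
    (hw0 : ofLex (w : Gam) 0 = 1) (hw1 : ofLex (w : Gam) 1 = 0)
    (hw'0 : ofLex (w' : Gam) 0 = 1) (hw'1 : ofLex (w' : Gam) 1 = 1)
    (hxy : x + y = w) (hxz : x + z = w') : x = 0 := by
  obtain ⟨hx1, hx2, hx3⟩ := x.2
  obtain ⟨hy1, hy2, hy3⟩ := y.2
  obtain ⟨hz1, hz2, hz3⟩ := z.2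
  have e1 : ofLex (x : Gam) 1 + ofLex (y : Gam) 1 = 0 := by
    rw [← coordAdd]; rw [coordEq hxy 1]; exact hw1
  have hx1' : ofLex (x : Gam) 1 = 0 := by linarith
  have e2 : ofLex (x : Gam) 1 + ofLex (z : Gam) 1 = 1 := by
    rw [← coordAdd]; rw [coordEq hxz 1]; exact hw'1
  have hz1' : ofLex (z : Gam) 1 = 1 := by linarith
  have e3 : ofLex (x : Gam) 0 + ofLex (z : Gam) 0 = 1 := by
    rw [← coordAdd]; rw [coordEq hxz 0]; exact hw'0
  have hx0 : ofLex (x : Gam) 0 = 0 := by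
    have hxq : 0 ≤ ofLex (x : Gam) 0 := le_trans (abs_nonneg _) hx3
    have : (1:ℚ) ≤ ofLex (z : Gam) 0 := by rw [← hz1']; exact hz2
    linarith
  exact eq_zero_of_q_zero x hx0

lemma cM_coords (n : ℕ) :
    ofLex ((cM n : Gam)) 0 = 1 ∧ ofLex ((cM n : Gam)) 1 = 0 :=
  ⟨mkG_apply0 _ _ _, mkG_apply1 _ _ _⟩
lemma dM_coords (n : ℕ) :
    ofLex ((dM n : Gam)) 0 = 1 ∧ ofLex ((dM n : Gam)) 1 = 0 :=
  ⟨mkG_apply0 _ _ _, mkG_apply1 _ _ _⟩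
lemma cM'_coords (n : ℕ) :
    ofLex ((cM' n : Gam)) 0 = 1 ∧ ofLex ((cM' n : Gam)) 1 = 1 :=
  ⟨mkG_apply0 _ _ _, mkG_apply1 _ _ _⟩
lemma dM'_coords (n : ℕ) :
    ofLex ((dM' n : Gam)) 0 = 1 ∧ ofLex ((dM' n : Gam)) 1 = 1 :=
  ⟨mkG_apply0 _ _ _, mkG_apply1 _ _ _⟩

lemma cM_inj {n m : ℕ} (h : cM n = cM m) : n = m := by
  have h2 := coordEq h 2
  rw [show ((cM n : Gam)) = mkG 1 0 (qv n) from rfl,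
      show ((cM m : Gam)) = mkG 1 0 (qv m) from rfl, mkG_apply2, mkG_apply2] at h2
  exact qv_inj h2
lemma cM_ne_dM (n m : ℕ) : cM n ≠ dM m := by
  intro h
  have h2 := coordEq h 2
  rw [show ((cM n : Gam)) = mkG 1 0 (qv n) from rfl,
      show ((dM m : Gam)) = mkG 1 0 (-qv m) from rfl, mkG_apply2, mkG_apply2] at h2
  have := qv_pos n
  have := qv_pos m
  linarith

/-- reducedness: x + y = 0 → x = 0 -/
lemma Mcar_reduced {x y : ↥Mcar} (h : x + y = 0) : x = 0 := by
  obtain ⟨hx1, hx2, hx3⟩ := x.2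
  obtain ⟨hy1, hy2, hy3⟩ := y.2
  have e0 : ofLex (x : Gam) 0 + ofLex (y : Gam) 0 = 0 := by
    rw [← coordAdd]; rw [coordEq h 0]; rfl
  have hxq : 0 ≤ ofLex (x : Gam) 0 := le_trans (abs_nonneg _) hx3
  have hyq : 0 ≤ ofLex (y : Gam) 0 := le_trans (abs_nonneg _) hy3
  exact eq_zero_of_q_zero x (by linarith)

end
noncomputable section
open AddMonoidAlgebra

abbrev Rr := AddMonoidAlgebra (ZMod 2) ↥Mcar

instance : IsDomain Rr := NoZeroDivisors.to_isDomain _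

lemma two_eq_zero : (2 : Rr) = 0 := by
  have h1 : (1 : Rr) = AddMonoidAlgebra.single 0 1 := AddMonoidAlgebra.one_def
  have : (2 : Rr) = 1 + 1 := one_add_one_eq_two.symm
  rw [this, h1, ← AddMonoidAlgebra.single_add]
  have : (1 + 1 : ZMod 2) = 0 := by decide
  rw [this, AddMonoidAlgebra.single_zero]

lemma sq_add (a b : Rr) : (a + b) * (a + b) = a * a + b * b := by
  have h : (a + b) * (a + b) = a * a + b * b + 2 * (a * b) := by ring
  rw [h, two_eq_zero, zero_mul, add_zero]

/-- halving map on M -/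
def halfM (e : ↥Mcar) : ↥Mcar := ⟨toLex ((2 : ℚ)⁻¹ • ofLex (e : Gam)), by
  obtain ⟨h1, h2, h3⟩ := e.2
  rw [mem_Mcar]
  have e0 : ofLex (toLex ((2 : ℚ)⁻¹ • ofLex (e : Gam))) = (2 : ℚ)⁻¹ • ofLex (e : Gam) := rfl
  rw [e0]
  refine ⟨?_, ?_, ?_⟩
  · rw [Finsupp.smul_apply]; positivity
  · rw [Finsupp.smul_apply, Finsupp.smul_apply, smul_eq_mul, smul_eq_mul]
    nlinarith
  · rw [Finsupp.smul_apply, Finsupp.smul_apply, smul_eq_mul, smul_eq_mul, abs_mul]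
    have : |(2:ℚ)⁻¹| = (2:ℚ)⁻¹ := by norm_num
    rw [this]
    nlinarith [abs_nonneg (ofLex (e : Gam) 2)]⟩

lemma halfM_add_self (e : ↥Mcar) : halfM e + halfM e = e := by
  apply Subtype.ext
  show (toLex ((2 : ℚ)⁻¹ • ofLex (e : Gam))) + (toLex ((2 : ℚ)⁻¹ • ofLex (e : Gam))) = (e : Gam)
  rw [← toLex_add, ← add_smul]
  norm_num

lemma zmod2_mul_self : ∀ c : ZMod 2, c * c = c := by decide

lemma sum_sq {ι : Type} (s : Finset ι) (f : ι → Rr) :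
    (∑ i ∈ s, f i) * (∑ i ∈ s, f i) = ∑ i ∈ s, f i * f i := by
  induction s using Finset.cons_induction with
  | empty => simp
  | cons a s ha ih => rw [Finset.sum_cons, Finset.sum_cons, sq_add, ih]

/-- every element of Rr is a square -/
lemma exists_sq (r : Rr) : ∃ g : Rr, g * g = r := by
  classical
  refine ⟨∑ m ∈ r.coeff.support, AddMonoidAlgebra.single (halfM m) (r.coeff m), ?_⟩
  rw [sum_sq]
  have : ∀ m ∈ r.coeff.support,
      AddMonoidAlgebra.single (halfM m) (r.coeff m) * AddMonoidAlgebra.single (halfM m) (r.coeff m)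
        = AddMonoidAlgebra.single m (r.coeff m) := by
    intro m _
    rw [AddMonoidAlgebra.single_mul_single, halfM_add_self, zmod2_mul_self]
  rw [Finset.sum_congr rfl this]
  exact AddMonoidAlgebra.sum_coeff_single r

end
noncomputable section
open Polynomial AddMonoidAlgebra

lemma no_irred (y : Rr) : ¬ Irreducible y := by
  intro hy
  obtain ⟨g, hg⟩ := exists_sq y
  rcases hy.isUnit_or_isUnit hg.symm with h | h <;>
    exact hy.not_isUnit (hg ▸ h.mul h)

lemma isUnit_eq_one {u : Rr} (h : IsUnit u) : u = 1 := by
  obtain ⟨v, hv⟩ := h.exists_right_inv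
  rw [AddMonoidAlgebra.one_def] at hv
  obtain ⟨x, y, hxy, hu, -⟩ := eq_single_of_mul_eq_single hv
  have hx0 : x = 0 := Mcar_reduced hxy
  rw [hu, hx0, ← AddMonoidAlgebra.one_def]

/-- monomial in Rr -/
def mono (e : ↥Mcar) : Rr := AddMonoidAlgebra.single e 1

lemma mono_ne_zero (e : ↥Mcar) : mono e ≠ 0 := by
  intro h
  exact one_ne_zero (AddMonoidAlgebra.single_eq_zero.mp h)

lemma mono_mul (e f : ↥Mcar) : mono e * mono f = mono (e + f) := by
  rw [mono, mono, mono, AddMonoidAlgebra.single_mul_single, mul_one]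

lemma mono_add_self (e : ↥Mcar) : mono e + mono e = 0 := by
  rw [mono, ← AddMonoidAlgebra.single_add]
  have : (1 + 1 : ZMod 2) = 0 := by decide
  rw [this, AddMonoidAlgebra.single_zero]

/-- the linear polynomials -/
def pg (c c' : ↥Mcar) : Polynomial Rr := C (mono c) * X + C (mono c')

lemma pg_coeff1 (c c' : ↥Mcar) : (pg c c').coeff 1 = mono c := by
  simp [pg, coeff_C]
lemma pg_coeff0 (c c' : ↥Mcar) : (pg c c').coeff 0 = mono c' := by
  simp [pg, coeff_C]
lemma pg_natDegree (c c' : ↥Mcar) : (pg c c').natDegree = 1 :=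
  natDegree_linear (mono_ne_zero c)
lemma pg_ne_zero (c c' : ↥Mcar) : pg c c' ≠ 0 := by
  intro h
  have := pg_coeff1 c c'
  rw [h, Polynomial.coeff_zero] at this
  exact mono_ne_zero c this.symm

lemma pg_irred {c c' : ↥Mcar}
    (hc0 : ofLex (c : Gam) 0 = 1) (hc1 : ofLex (c : Gam) 1 = 0)
    (hc'0 : ofLex (c' : Gam) 0 = 1) (hc'1 : ofLex (c' : Gam) 1 = 1) :
    Irreducible (pg c c') := by
  constructor
  · intro h
    have := natDegree_eq_zero_of_isUnit h
    rw [pg_natDegree] at this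
    exact one_ne_zero this
  · intro p q hpq
    have hp0 : p ≠ 0 := by rintro rfl; rw [zero_mul] at hpq; exact pg_ne_zero c c' hpq
    have hq0 : q ≠ 0 := by rintro rfl; rw [mul_zero] at hpq; exact pg_ne_zero c c' hpq
    have hdeg : p.natDegree + q.natDegree = 1 := by
      rw [← Polynomial.natDegree_mul hp0 hq0, ← hpq, pg_natDegree]
    rcases Nat.eq_zero_or_pos p.natDegree with hp | hp
    · left
      obtain ⟨r, hr⟩ : ∃ r, p = C r := ⟨p.coeff 0, eq_C_of_natDegree_eq_zero hp⟩
      have e1 : r * q.coeff 1 = mono c := by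
        rw [← pg_coeff1 c c', hpq, hr, coeff_C_mul]
      have e0 : r * q.coeff 0 = mono c' := by
        rw [← pg_coeff0 c c', hpq, hr, coeff_C_mul]
      obtain ⟨x, y, hxy, hrx, -⟩ := eq_single_of_mul_eq_single e1
      obtain ⟨x', z, hxz, hrx', -⟩ := eq_single_of_mul_eq_single e0
      have hxx : x = x' := AddMonoidAlgebra.single_left_injective one_ne_zero (hrx ▸ hrx')
      rw [← hxx] at hxz
      have hx0 : x = 0 := cop hc0 hc1 hc'0 hc'1 hxy hxz
      rw [hr, hrx, hx0, ← AddMonoidAlgebra.one_def, map_one]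
      exact isUnit_one
    · right
      have hq : q.natDegree = 0 := by omega
      obtain ⟨r, hr⟩ : ∃ r, q = C r := ⟨q.coeff 0, eq_C_of_natDegree_eq_zero hq⟩
      have e1 : p.coeff 1 * r = mono c := by
        rw [← pg_coeff1 c c', hpq, hr, coeff_mul_C]
      have e0 : p.coeff 0 * r = mono c' := by
        rw [← pg_coeff0 c c', hpq, hr, coeff_mul_C]
      obtain ⟨x, y, hxy, -, hry⟩ := eq_single_of_mul_eq_single e1
      obtain ⟨x', z, hxz, -, hrz⟩ := eq_single_of_mul_eq_single e0
      have hyz : y = z := AddMonoidAlgebra.single_left_injective one_ne_zero (hry ▸ hrz)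
      rw [add_comm] at hxy hxz
      rw [← hyz] at hxz
      have hy0 : y = 0 := cop hc0 hc1 hc'0 hc'1 hxy hxz
      rw [hr, hry, hy0, ← AddMonoidAlgebra.one_def, map_one]
      exact isUnit_one

def gP (n : ℕ) : Polynomial Rr := pg (cM n) (cM' n)
def hP (n : ℕ) : Polynomial Rr := pg (dM n) (dM' n)
def FF : Polynomial Rr := C (mono LM) * X ^ 2 + C (mono L2A)

lemma gP_irred (n : ℕ) : Irreducible (gP n) :=
  pg_irred (cM_coords n).1 (cM_coords n).2 (cM'_coords n).1 (cM'_coords n).2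
lemma hP_irred (n : ℕ) : Irreducible (hP n) :=
  pg_irred (dM_coords n).1 (dM_coords n).2 (dM'_coords n).1 (dM'_coords n).2

lemma expand2 (α β γ δ : Rr) :
    (C α * X + C β) * (C γ * X + C δ)
      = C (α * γ) * X ^ 2 + C (α * δ + β * γ) * X + C (β * δ) := by
  rw [C_mul, C_mul, C_add, C_mul, C_mul]
  ring

lemma prod_id (n : ℕ) : gP n * hP n = FF := by
  rw [gP, hP, pg, pg, expand2]
  rw [mono_mul, mono_mul, mono_mul, mono_mul]
  rw [cM_add_dM, cM_add_dM', cM'_add_dM, cM'_add_dM', mono_add_self, map_zero, zero_mul,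
    add_zero, FF]

lemma FF_ne_zero : FF ≠ 0 := by
  intro h
  have : FF.coeff 2 = mono LM := by simp [FF, coeff_C]
  rw [h, Polynomial.coeff_zero] at this
  exact mono_ne_zero LM this.symm

lemma assoc_eq {p q : Polynomial Rr} (h : Associated p q) : p = q := by
  obtain ⟨u, hu⟩ := h
  obtain ⟨r, hr, hCr⟩ := Polynomial.isUnit_iff.mp u.isUnit
  rw [isUnit_eq_one hr, map_one] at hCr
  rw [← hu, ← hCr, mul_one]

lemma gP_inj : Function.Injective gP := by
  intro n m h
  have := congrArg (fun p => Polynomial.coeff p 1) h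
  simp only [gP, pg_coeff1] at this
  exact cM_inj (AddMonoidAlgebra.single_left_injective one_ne_zero this)

lemma gP_ne_hP (n m : ℕ) : gP n ≠ hP m := by
  intro h
  have := congrArg (fun p => Polynomial.coeff p 1) h
  simp only [gP, hP, pg_coeff1] at this
  exact cM_ne_dM n m (AddMonoidAlgebra.single_left_injective one_ne_zero this)

end
lemma Rr_uffd : IsUFFD Rr := by
  intro a _ _
  apply Set.Finite.subset (Set.finite_singleton (0 : Multiset (Associates Rr)))
  intro s hs
  obtain ⟨hirr, -⟩ := hs
  simp only [Set.mem_singleton_iff]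
  by_contra hne
  obtain ⟨p, hp⟩ := Multiset.exists_mem_of_ne_zero hne
  obtain ⟨y, rfl⟩ := Associates.mk_surjective p
  exact no_irred y (Associates.irreducible_mk.mp (hirr _ hp))

noncomputable def sN (n : ℕ) : Multiset (Associates (Polynomial Rr)) :=
  {Associates.mk (gP n), Associates.mk (hP n)}

lemma sN_mem (n : ℕ) : sN n ∈ FactorizationsOf FF := by
  constructor
  · intro p hp
    rw [sN, Multiset.insert_eq_cons] at hp
    rcases Multiset.mem_cons.mp hp with rfl | hp
    · exact Associates.irreducible_mk.mpr (gP_irred n)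
    · rw [Multiset.mem_singleton.mp hp]
      exact Associates.irreducible_mk.mpr (hP_irred n)
  · show (sN n).prod = Associates.mk FF
    rw [sN, Multiset.insert_eq_cons, Multiset.prod_cons, Multiset.prod_singleton,
      Associates.mk_mul_mk, prod_id]

lemma sN_inj : Function.Injective sN := by
  intro n m h
  have hmem : Associates.mk (gP n) ∈ sN m := by
    rw [← h, sN, Multiset.insert_eq_cons]; exact Multiset.mem_cons_self _ _
  rw [sN, Multiset.insert_eq_cons] at hmem
  rcases Multiset.mem_cons.mp hmem with he | he
  · exact gP_inj (assoc_eq (Associates.mk_eq_mk_iff_associated.mp he))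
  · rw [Multiset.mem_singleton] at he
    exact absurd (assoc_eq (Associates.mk_eq_mk_iff_associated.mp he)) (gP_ne_hP n m)

lemma not_uffd_poly : ¬ IsUFFD (Polynomial Rr) := by
  intro hU
  have hatomic : IsAtomicElem FF := by
    refine ⟨{gP 0, hP 0}, ?_, ?_⟩
    · intro p hp
      rw [Multiset.insert_eq_cons] at hp
      rcases Multiset.mem_cons.mp hp with rfl | hp
      · exact gP_irred 0
      · rw [Multiset.mem_singleton.mp hp]; exact hP_irred 0
    · rw [Multiset.insert_eq_cons, Multiset.prod_cons, Multiset.prod_singleton, prod_id]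
      exact Associated.refl _
  have hfin := hU FF FF_ne_zero hatomic
  have hinf : (FactorizationsOf FF).Infinite :=
    Set.infinite_of_injective_forall_mem sN_inj sN_mem
  exact hinf hfin



/-- There exists an integral domain `R` that is a U-FFD such that the
polynomial ring `R[X]` is not a U-FFD: the unrestricted finite factorization property does
not ascend to polynomial extensions. -/


theorem exists_uffd_with_polynomial_ring_not_uffd :
    ∃ (R : Type) (_ : CommRing R) (_ : IsDomain R),
      IsUFFD R ∧ ¬ IsUFFD (Polynomial R) := by
  exact ⟨Rr, inferInstance, inferInstance, Rr_uffd, not_uffd_poly⟩
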